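/- For factors φ₁ over variable set 𝐗 and φ₂ over variable set 𝐘, and a set 𝐙 ⊆ 𝐘 of variables with 𝐙 ∩ 𝐗 = ∅, summing out 𝐙 distributes over the factor product: ∑_𝐙 (φ₁ ⊙ φ₂) = φ₁ ⊙ (∑_𝐙 φ₂). -/
import Mathlib


open Finset

/-- A factor over a set `S` of variables: a function on total instantiations
that only depends on the values of the variables in `S`. -/
def FDependsOn {V : Type*} {Val : V → Type*}
    (φ : (∀ v, Val v) → NNReal) (S : Finset V) : Prop :=
  ∀ a b : ∀ v, Val v, (∀ v ∈ S, a v = b v) → φ a = φ b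

/-- Summing out the variables in `Z` from a factor. -/
def fsumOut {V : Type*} [DecidableEq V] {Val : V → Type*} [∀ v, Fintype (Val v)]
    (Z : Finset V) (φ : (∀ v, Val v) → NNReal) : (∀ v, Val v) → NNReal :=
  fun a => ∑ z : (∀ v : Z, Val v), φ (fun v => if h : v ∈ Z then z ⟨v, h⟩ else a v)


/-- Summing out `Z ⊆ Y` with `Z ∩ X = ∅` distributes over the factor product. -/
theorem sumOut_mul_distrib {V : Type*} [DecidableEq V] {Val : V → Type*}
    [∀ v, Fintype (Val v)] (X Y Z : Finset V)
    (φ₁ φ₂ : (∀ v, Val v) → NNReal)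
    (h₁ : FDependsOn φ₁ X) (h₂ : FDependsOn φ₂ Y)
    (hZY : Z ⊆ Y) (hZX : Disjoint Z X) :
    fsumOut Z (fun a => φ₁ a * φ₂ a) = fun a => φ₁ a * fsumOut Z φ₂ a := by
  funext a
  unfold fsumOut
  rw [Finset.mul_sum]
  refine Finset.sum_congr rfl fun z _ => ?_
  beta_reduce
  congr 1
  apply h₁
  intro v hv
  have : v ∉ Z := fun hz => (Finset.disjoint_left.mp hZX) hz hv
  simp [this]
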